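/- Under the asymptotic framework with p_m → 0, let α_m ∈ (0,1) and let ω_{B,m} > 0 be a solution of the BFDR equation (1 − D(ω))/(1 − D(ω·(1+u_m)^(−1/2))) = r_{α_m}/f_m, where r_α = α/(1−α) and f_m = (1−p_m)/p_m. If δ_m·r_{α_m} → C_1/(1 − C_2), then ω_{B,m}² = C_B·(f_m/r_{α_m})^(2/γ)·(1 + o(1)), i.e., ω_{B,m}²/(C_B·(f_m/r_{α_m})^(2/γ)) → 1, where C_B = [(C_d/γ)/(1 − D(√C))]^(2/γ), C_1 = 2√C·d(√C)/γ and C_2 = 2D(√C) − 1. -/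

import Mathlib

open MeasureTheory Filter

/-- Cumulative distribution function of a density `d` with respect to Lebesgue measure. -/
noncomputable def cdf (d : ℝ → ℝ) (x : ℝ) : ℝ := ∫ t in Set.Iic x, d t

/-- A monotone polynomial tail (MPT) density with tail index `γ` and tail constant `Cd`:
a probability density function that is even (or supported on the nonnegative half-line),
strictly positive on `(0, ∞)`, satisfies `d x * x ^ (γ + 1) → Cd` as `x → ∞`, and has a
monotone likelihood ratio: for every `θ > 1`, `x ↦ d (x / θ) / d x` is strictly increasing
on `(0, ∞)`. -/
structure IsMPT (d : ℝ → ℝ) (γ Cd : ℝ) : Prop where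
  gamma_pos : 0 < γ
  Cd_pos : 0 < Cd
  nonneg : ∀ x, 0 ≤ d x
  integrable : Integrable d
  integral_one : ∫ x, d x = 1
  even_or_halfline : (∀ x, d (-x) = d x) ∨ (∀ x < 0, d x = 0)
  pos : ∀ x, 0 < x → 0 < d x
  tail : Tendsto (fun x => d x * x ^ (γ + 1)) atTop (nhds Cd)
  mlr : ∀ θ : ℝ, 1 < θ → StrictMonoOn (fun x => d (x / θ) / d x) (Set.Ioi 0)

namespace BFDRaux
open Set Real MeasureTheory Filter
variable {d : ℝ → ℝ} {γ Cd : ℝ}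

noncomputable def T (d : ℝ → ℝ) (x : ℝ) : ℝ := ∫ t in Set.Ioi x, d t


lemma one_sub_cdf (h : IsMPT d γ Cd) (x : ℝ) : 1 - cdf d x = T d x := by
  have h2 := MeasureTheory.integral_add_compl (measurableSet_Iic (a := x)) h.integrable
  rw [compl_Iic] at h2
  rw [cdf, T]
  rw [h.integral_one] at h2
  linarith

lemma T_antitone (h : IsMPT d γ Cd) : Antitone (T d) := fun a b hab =>
  setIntegral_mono_set h.integrable.integrableOn
    (ae_restrict_of_ae (Filter.Eventually.of_forall h.nonneg))
    ((Ioi_subset_Ioi hab).eventuallyLE)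

lemma T_nonneg (h : IsMPT d γ Cd) (x : ℝ) : 0 ≤ T d x :=
  setIntegral_nonneg measurableSet_Ioi fun t _ => h.nonneg t

lemma T_le_one (h : IsMPT d γ Cd) (x : ℝ) : T d x ≤ 1 := by
  rw [← h.integral_one]
  exact setIntegral_le_integral h.integrable (Filter.Eventually.of_forall h.nonneg)

lemma T_pos (h : IsMPT d γ Cd) (x : ℝ) : 0 < T d x := by
  set c := max x 0 with hc
  have h1 : T d c ≤ T d x := T_antitone h (le_max_left _ _)
  have h2 : (∫ t in Set.Ioc (c+1) (c+2), d t) ≤ T d c :=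
    setIntegral_mono_set h.integrable.integrableOn
      (ae_restrict_of_ae (Filter.Eventually.of_forall h.nonneg))
      ((Ioc_subset_Ioi_self.trans (Ioi_subset_Ioi (by linarith [le_max_right x 0]))).eventuallyLE)
  have h3 : 0 < ∫ t in Set.Ioc (c+1) (c+2), d t := by
    rw [← intervalIntegral.integral_of_le (by linarith : c+1 ≤ c+2)]
    apply intervalIntegral.intervalIntegral_pos_of_pos_on
      (h.integrable.intervalIntegrable)
    · intro t ht
      exact h.pos t (by have := le_max_right x 0; simp only [Set.mem_Ioo] at ht; linarith)
    · linarith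
  linarith

lemma cdf_continuous (h : IsMPT d γ Cd) : Continuous (cdf d) := by
  have key : ∀ x, cdf d x = cdf d 0 + ∫ t in (0:ℝ)..x, d t := by
    intro x
    have h2 := intervalIntegral.integral_Iic_sub_Iic
      (h.integrable.integrableOn (s := Iic 0)) (h.integrable.integrableOn (s := Iic x))
    rw [cdf, cdf]
    linarith
  have hco : Continuous fun x => cdf d 0 + ∫ t in (0:ℝ)..x, d t :=
    continuous_const.add (intervalIntegral.continuous_primitive
      (fun _ _ => h.integrable.intervalIntegrable) 0)
  exact hco.congr fun x => (key x).symm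

lemma T_continuous (h : IsMPT d γ Cd) : Continuous (T d) := by
  have : Continuous fun x => 1 - cdf d x := continuous_const.sub (cdf_continuous h)
  exact this.congr fun x => one_sub_cdf h x



lemma lt_of_strictMonoOn_tendsto {φ : ℝ → ℝ} {L x : ℝ}
    (hm : StrictMonoOn φ (Set.Ioi 0)) (hl : Tendsto φ atTop (nhds L)) (hx : 0 < x) :
    φ x < L := by
  have h1 : φ x < φ (x + 1) := hm (mem_Ioi.2 hx) (mem_Ioi.2 (by linarith)) (by linarith)
  have h2 : φ (x + 1) ≤ L := by
    refine ge_of_tendsto hl ?_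
    filter_upwards [eventually_ge_atTop (x + 1)] with y hy
    rcases eq_or_lt_of_le hy with rfl | hlt
    · exact le_rfl
    · exact (hm (mem_Ioi.2 (by linarith)) (mem_Ioi.2 (by linarith)) hlt).le
  linarith

lemma mlr_ratio_tendsto (h : IsMPT d γ Cd) {θ : ℝ} (hθ : 1 < θ) :
    Tendsto (fun x => d (x / θ) / d x) atTop (nhds (θ ^ (γ + 1))) := by
  have hθ0 : (0:ℝ) < θ := by linarith
  have hnum : Tendsto (fun x => d (x / θ) * (x / θ) ^ (γ + 1)) atTop (nhds Cd) :=
    h.tail.comp (Filter.tendsto_id.atTop_div_const hθ0)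
  have hden := h.tail
  have hr : Tendsto (fun x => (d (x / θ) * (x / θ) ^ (γ + 1)) /
      (d x * x ^ (γ + 1)) * θ ^ (γ + 1)) atTop (nhds (Cd / Cd * θ ^ (γ + 1))) :=
    (hnum.div hden h.Cd_pos.ne').mul_const _
  rw [div_self h.Cd_pos.ne', one_mul] at hr
  refine hr.congr' ?_
  filter_upwards [eventually_gt_atTop (0:ℝ)] with x hx
  have hxθ : (0:ℝ) < x / θ := div_pos hx hθ0
  have hdx : d x ≠ 0 := (h.pos x hx).ne'
  have hx1 : x ^ (γ + 1) ≠ 0 := (rpow_pos_of_pos hx _).ne'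
  have hkey : (x / θ) ^ (γ + 1) * θ ^ (γ + 1) = x ^ (γ + 1) := by
    rw [← Real.mul_rpow hxθ.le hθ0.le, div_mul_cancel₀ _ hθ0.ne']
  field_simp
  rw [← hkey]
  ring

lemma hfun_strictMonoOn (h : IsMPT d γ Cd) :
    StrictMonoOn (fun x => d x * x ^ (γ + 1)) (Set.Ioi 0) := by
  intro a ha b hb hab
  rw [mem_Ioi] at ha hb
  set θ := b / a with hθdef
  have hθ : 1 < θ := (one_lt_div ha).2 hab
  have hlt : d (b / θ) / d b < θ ^ (γ + 1) :=
    lt_of_strictMonoOn_tendsto (φ := fun x => d (x / θ) / d x) (h.mlr θ hθ) (mlr_ratio_tendsto h hθ) hb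
  have hba : b / θ = a := by
    rw [hθdef]
    field_simp
  rw [hba] at hlt
  have hdb : 0 < d b := h.pos b hb
  rw [div_lt_iff₀ hdb] at hlt
  have hθval : θ ^ (γ + 1) = b ^ (γ + 1) / a ^ (γ + 1) := Real.div_rpow hb.le ha.le _
  rw [hθval] at hlt
  have hapow : 0 < a ^ (γ + 1) := rpow_pos_of_pos ha _
  have := mul_lt_mul_of_pos_right hlt hapow
  calc d a * a ^ (γ + 1) < b ^ (γ + 1) / a ^ (γ + 1) * d b * a ^ (γ + 1) := by
        linarith
    _ = d b * b ^ (γ + 1) := by field_simp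

lemma hfun_lt_Cd (h : IsMPT d γ Cd) {x : ℝ} (hx : 0 < x) : d x * x ^ (γ + 1) < Cd :=
  lt_of_strictMonoOn_tendsto (φ := fun x => d x * x ^ (γ + 1)) (hfun_strictMonoOn h) h.tail hx

lemma d_eq_hfun {x : ℝ} (hx : 0 < x) : d x = (d x * x ^ (γ + 1)) * x ^ (-(γ + 1)) := by
  rw [Real.rpow_neg hx.le, mul_assoc, mul_inv_cancel₀ (rpow_pos_of_pos hx _).ne', mul_one]

lemma integral_Ioi_pow (hγ : 0 < γ) {x : ℝ} (hx : 0 < x) :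
    ∫ t in Set.Ioi x, t ^ (-(γ + 1)) = x ^ (-γ) / γ := by
  rw [integral_Ioi_rpow_of_lt (by linarith) hx]
  rw [show -(γ + 1) + 1 = -γ by ring]
  rw [div_neg, neg_div, neg_neg]

lemma integrableOn_pow_Ioi (hγ : 0 < γ) {x : ℝ} (hx : 0 < x) :
    IntegrableOn (fun t : ℝ => t ^ (-(γ + 1))) (Set.Ioi x) :=
  integrableOn_Ioi_rpow_of_lt (by linarith) hx

/-- lower bound for the tail integral by a constant multiple of the power tail -/
lemma T_lower (h : IsMPT d γ Cd) {x c : ℝ} (hx : 0 < x)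
    (hc : ∀ t, x < t → c * t ^ (-(γ + 1)) ≤ d t) :
    c * (x ^ (-γ) / γ) ≤ T d x := by
  have hint : IntegrableOn (fun t : ℝ => c * t ^ (-(γ + 1))) (Set.Ioi x) :=
    (integrableOn_pow_Ioi h.gamma_pos hx).const_mul c
  have := setIntegral_mono_on hint h.integrable.integrableOn measurableSet_Ioi
    (fun t ht => hc t (mem_Ioi.1 ht))
  rwa [MeasureTheory.integral_const_mul, integral_Ioi_pow h.gamma_pos hx] at this

/-- upper bound for the tail integral -/
lemma T_upper (h : IsMPT d γ Cd) {x c : ℝ} (hx : 0 < x)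
    (hc : ∀ t, x < t → d t ≤ c * t ^ (-(γ + 1))) :
    T d x ≤ c * (x ^ (-γ) / γ) := by
  have hint : IntegrableOn (fun t : ℝ => c * t ^ (-(γ + 1))) (Set.Ioi x) :=
    (integrableOn_pow_Ioi h.gamma_pos hx).const_mul c
  have := setIntegral_mono_on h.integrable.integrableOn hint measurableSet_Ioi
    (fun t ht => hc t (mem_Ioi.1 ht))
  rwa [MeasureTheory.integral_const_mul, integral_Ioi_pow h.gamma_pos hx] at this

lemma integral_Ioc_pow (hγ : 0 < γ) {a b : ℝ} (ha : 0 < a) (hab : a ≤ b) :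
    ∫ t in Set.Ioc a b, t ^ (-(γ + 1)) = (a ^ (-γ) - b ^ (-γ)) / γ := by
  rw [← intervalIntegral.integral_of_le hab]
  rw [integral_rpow (Or.inr ⟨by intro hh; linarith, by
    intro hmem
    rcases Set.mem_uIcc.1 hmem with ⟨h1, _⟩ | ⟨_, h2⟩
    · linarith
    · linarith⟩)]
  rw [show -(γ + 1) + 1 = -γ by ring]
  rw [show b ^ (-γ) - a ^ (-γ) = -(a ^ (-γ) - b ^ (-γ)) by ring, neg_div, div_neg, neg_neg]

lemma integral_Ioc_d_upper (h : IsMPT d γ Cd) {a b c : ℝ} (ha : 0 < a) (hab : a ≤ b)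
    (hc : ∀ t, a < t → t ≤ b → d t ≤ c * t ^ (-(γ + 1))) :
    (∫ t in Set.Ioc a b, d t) ≤ c * ((a ^ (-γ) - b ^ (-γ)) / γ) := by
  have hint : IntegrableOn (fun t : ℝ => c * t ^ (-(γ + 1))) (Set.Ioc a b) :=
    (((integrableOn_pow_Ioi h.gamma_pos ha).mono_set Ioc_subset_Ioi_self).const_mul c)
  have := setIntegral_mono_on h.integrable.integrableOn hint measurableSet_Ioc
    (fun t ht => hc t ht.1 ht.2)
  rwa [MeasureTheory.integral_const_mul, integral_Ioc_pow h.gamma_pos ha hab] at this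

lemma T_split (h : IsMPT d γ Cd) {a b : ℝ} (hab : a ≤ b) :
    T d a = (∫ t in Set.Ioc a b, d t) + T d b := by
  rw [T, T, ← MeasureTheory.setIntegral_union (Set.Ioc_disjoint_Ioi le_rfl)
    measurableSet_Ioi h.integrable.integrableOn h.integrable.integrableOn,
    Set.Ioc_union_Ioi_eq_Ioi hab]
lemma T_tail (h : IsMPT d γ Cd) :
    Tendsto (fun x => T d x * x ^ γ) atTop (nhds (Cd / γ)) := by
  have hγ := h.gamma_pos
  rw [Metric.tendsto_atTop]
  intro ε hε
  have hlt : Cd - γ * ε / 2 < Cd := by nlinarith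
  have hev : ∀ᶠ t in atTop, Cd - γ * ε / 2 ≤ d t * t ^ (γ + 1) :=
    h.tail.eventually (eventually_ge_nhds hlt)
  obtain ⟨M, hM⟩ := eventually_atTop.1 hev
  refine ⟨max M 1, fun x hx => ?_⟩
  have hx1 : (1:ℝ) ≤ x := le_trans (le_max_right M 1) hx
  have hx0 : (0:ℝ) < x := by linarith
  have hxM : M ≤ x := le_trans (le_max_left M 1) hx
  have hxx : x ^ (-γ) * x ^ γ = 1 := by
    rw [Real.rpow_neg hx0.le]
    exact inv_mul_cancel₀ (rpow_pos_of_pos hx0 γ).ne'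
  have hup : T d x ≤ Cd * (x ^ (-γ) / γ) := by
    refine T_upper h hx0 fun t ht => ?_
    have ht0 : 0 < t := lt_trans hx0 ht
    rw [d_eq_hfun (d := d) (γ := γ) ht0]
    exact mul_le_mul_of_nonneg_right (hfun_lt_Cd h ht0).le (rpow_pos_of_pos ht0 _).le
  have hlo : (Cd - γ * ε / 2) * (x ^ (-γ) / γ) ≤ T d x := by
    refine T_lower h hx0 fun t ht => ?_
    have ht0 : 0 < t := lt_trans hx0 ht
    rw [d_eq_hfun (d := d) (γ := γ) ht0]
    exact mul_le_mul_of_nonneg_right (hM t (le_of_lt (lt_of_le_of_lt hxM ht)))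
      (rpow_pos_of_pos ht0 _).le
  have hxp : 0 < x ^ γ := rpow_pos_of_pos hx0 γ
  have hub : T d x * x ^ γ ≤ Cd / γ := by
    have := mul_le_mul_of_nonneg_right hup hxp.le
    calc T d x * x ^ γ ≤ Cd * (x ^ (-γ) / γ) * x ^ γ := this
      _ = Cd / γ * (x ^ (-γ) * x ^ γ) := by ring
      _ = Cd / γ := by rw [hxx, mul_one]
  have hlb : Cd / γ - ε / 2 ≤ T d x * x ^ γ := by
    have := mul_le_mul_of_nonneg_right hlo hxp.le
    have hxx' : x ^ (-γ) / γ * x ^ γ = 1 / γ := by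
      rw [div_mul_eq_mul_div, hxx]
    have heq : (Cd - γ * ε / 2) * (x ^ (-γ) / γ) * x ^ γ = Cd / γ - ε / 2 := by
      rw [mul_assoc, hxx', mul_one_div, sub_div]
      congr 1
      rw [div_eq_iff hγ.ne']
      ring
    linarith
  rw [Real.dist_eq, abs_lt]
  constructor <;> linarith

lemma g_strictMonoOn (h : IsMPT d γ Cd) :
    StrictMonoOn (fun x => x ^ γ * T d x) (Set.Ioi 0) := by
  have hγ := h.gamma_pos
  intro a ha b hb hab
  rw [mem_Ioi] at ha hb
  simp only
  have hb2 : (0:ℝ) < 2 * b := by linarith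
  set H := d b * b ^ (γ + 1) with hH
  set H2 := d (2 * b) * (2 * b) ^ (γ + 1) with hH2
  have hHH2 : H < H2 := hfun_strictMonoOn h (mem_Ioi.2 hb) (mem_Ioi.2 hb2) (by linarith)
  have hHpos : 0 < H := mul_pos (h.pos b hb) (rpow_pos_of_pos hb _)
  set A := a ^ γ with hA
  set B := b ^ γ with hB
  set A' := a ^ (-γ) with hA'
  set B' := b ^ (-γ) with hB'
  set Z := (2 * b) ^ (-γ) with hZ
  have hAA' : A * A' = 1 := by
    rw [hA, hA', Real.rpow_neg ha.le, mul_inv_cancel₀ (rpow_pos_of_pos ha γ).ne']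
  have hBB' : B * B' = 1 := by
    rw [hB, hB', Real.rpow_neg hb.le, mul_inv_cancel₀ (rpow_pos_of_pos hb γ).ne']
  have hAB : A < B := Real.rpow_lt_rpow ha.le hab hγ
  have hApos : 0 < A := rpow_pos_of_pos ha γ
  have hZpos : 0 < Z := rpow_pos_of_pos hb2 _
  set I := ∫ t in Set.Ioc a b, d t with hI
  have hsplit : T d a = I + T d b := T_split h hab.le
  -- upper bound on I
  have hIup : I ≤ H * ((A' - B') / γ) := by
    refine integral_Ioc_d_upper h ha hab.le fun t hta htb => ?_
    have ht0 : 0 < t := lt_trans ha hta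
    rw [d_eq_hfun (d := d) (γ := γ) ht0]
    refine mul_le_mul_of_nonneg_right ?_ (rpow_pos_of_pos ht0 _).le
    rcases eq_or_lt_of_le htb with rfl | hlt
    · exact le_rfl
    · exact (hfun_strictMonoOn h (mem_Ioi.2 ht0) (mem_Ioi.2 hb) hlt).le
  -- lower bound on T d b
  have hT1 : H * ((B' - Z) / γ) ≤ ∫ t in Set.Ioc b (2 * b), d t := by
    have hint : IntegrableOn (fun t : ℝ => H * t ^ (-(γ + 1))) (Set.Ioc b (2 * b)) :=
      ((integrableOn_pow_Ioi h.gamma_pos hb).mono_set Ioc_subset_Ioi_self).const_mul H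
    have hmono := setIntegral_mono_on hint h.integrable.integrableOn measurableSet_Ioc
      (fun t ht => ?_)
    · rwa [MeasureTheory.integral_const_mul, integral_Ioc_pow h.gamma_pos hb (by linarith)]
        at hmono
    · have ht0 : 0 < t := lt_trans hb ht.1
      rw [d_eq_hfun (d := d) (γ := γ) ht0]
      exact mul_le_mul_of_nonneg_right
        (hfun_strictMonoOn h (mem_Ioi.2 hb) (mem_Ioi.2 ht0) ht.1).le
        (rpow_pos_of_pos ht0 _).le
  have hT2 : H2 * (Z / γ) ≤ T d (2 * b) := by
    refine T_lower h hb2 fun t ht => ?_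
    have ht0 : 0 < t := lt_trans hb2 ht
    rw [d_eq_hfun (d := d) (γ := γ) ht0]
    exact mul_le_mul_of_nonneg_right
      (hfun_strictMonoOn h (mem_Ioi.2 hb2) (mem_Ioi.2 ht0) ht).le
      (rpow_pos_of_pos ht0 _).le
  have hTb : H * ((B' - Z) / γ) + H2 * (Z / γ) ≤ T d b := by
    rw [T_split h (by linarith : b ≤ 2 * b)]
    exact add_le_add hT1 hT2
  -- combine
  rw [hsplit]
  have e1 : A * I ≤ A * (H * ((A' - B') / γ)) := mul_le_mul_of_nonneg_left hIup hApos.le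
  have e2 : A * (H * ((A' - B') / γ)) = (H * (A * A') - H * (A * B')) / γ := by ring
  rw [hAA'] at e2
  have e3 : (B - A) * (H * ((B' - Z) / γ) + H2 * (Z / γ)) ≤ (B - A) * T d b :=
    mul_le_mul_of_nonneg_left hTb (by linarith)
  have e4 : (B - A) * (H * ((B' - Z) / γ) + H2 * (Z / γ))
      = (H * (B * B') - H * (A * B')) / γ + (B - A) * ((H2 - H) * Z) / γ := by ring
  rw [hBB'] at e4
  have e5 : 0 < (B - A) * ((H2 - H) * Z) / γ := by
    apply div_pos _ hγ
    exact mul_pos (by linarith) (mul_pos (by linarith) hZpos)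
  have expand : A * (I + T d b) = A * I + A * T d b := by ring
  have expand2 : (B - A) * T d b = B * T d b - A * T d b := by ring
  linarith
lemma tendsto_of_g (h : IsMPT d γ Cd) {t : ℕ → ℝ} {x0 : ℝ} (hx0 : 0 < x0)
    (ht : ∀ m, 0 < t m)
    (hg : Tendsto (fun m => t m ^ γ * T d (t m)) atTop (nhds (x0 ^ γ * T d x0))) :
    Tendsto t atTop (nhds x0) := by
  rw [Metric.tendsto_atTop]
  intro ε hε
  set ε' := min (ε / 2) (x0 / 2) with hε'def
  have hε' : 0 < ε' := lt_min (by linarith) (by linarith)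
  have hε'2 : ε' ≤ ε / 2 := min_le_left _ _
  have hε'3 : ε' ≤ x0 / 2 := min_le_right _ _
  have ha : 0 < x0 - ε' := by linarith
  set g := fun x : ℝ => x ^ γ * T d x with hgdef
  have hmono := g_strictMonoOn h
  have h1 : g (x0 - ε') < g x0 := hmono (mem_Ioi.2 ha) (mem_Ioi.2 hx0) (by linarith)
  have h2 : g x0 < g (x0 + ε') := hmono (mem_Ioi.2 hx0) (mem_Ioi.2 (by linarith)) (by linarith)
  have hev1 : ∀ᶠ m in atTop, g (x0 - ε') < g (t m) := hg.eventually (eventually_gt_nhds h1)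
  have hev2 : ∀ᶠ m in atTop, g (t m) < g (x0 + ε') := hg.eventually (eventually_lt_nhds h2)
  obtain ⟨N, hN⟩ := eventually_atTop.1 (hev1.and hev2)
  refine ⟨N, fun m hm => ?_⟩
  obtain ⟨hm1, hm2⟩ := hN m hm
  have hlow : x0 - ε' < t m := by
    by_contra hc
    push_neg at hc
    have : g (t m) ≤ g (x0 - ε') :=
      hmono.monotoneOn (mem_Ioi.2 (ht m)) (mem_Ioi.2 ha) hc
    linarith
  have hhigh : t m < x0 + ε' := by
    by_contra hc
    push_neg at hc
    have : g (x0 + ε') ≤ g (t m) :=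
      hmono.monotoneOn (mem_Ioi.2 (by linarith)) (mem_Ioi.2 (ht m)) hc
    linarith
  rw [Real.dist_eq, abs_lt]
  constructor <;> linarith
end BFDRaux

open BFDRaux Set Real

/-- Proposition 3 (form of the BFDR threshold): under the asymptotic framework with `p_m → 0`,
if `δ_m * r_{α_m} → C₁ / (1 - C₂)`, then the threshold `ω_{B,m}` solving the BFDR equation
satisfies `ω_{B,m} ^ 2 = C_B * (f_m / r_{α_m}) ^ (2/γ) * (1 + o(1))`, where
`C_B = ((Cd / γ) / (1 - D (√C))) ^ (2/γ)`. -/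
theorem BFDR_threshold_form (d : ℝ → ℝ) (γ Cd : ℝ) (h : IsMPT d γ Cd)
    (heven : ∀ x, d (-x) = d x) (hcont : ContinuousOn d (Set.Ioi 0))
    (C : ℝ) (hC : 0 < C)
    (p : ℕ → ℝ) (hp : ∀ m, p m ∈ Set.Ioo (0 : ℝ) 1) (hp0 : Tendsto p atTop (nhds 0))
    (u : ℕ → ℝ) (hu : ∀ m, 0 < u m) (hu' : Tendsto u atTop atTop)
    (δ : ℕ → ℝ) (hδ : ∀ m, 0 < δ m)
    (f v : ℕ → ℝ) (hf : ∀ m, f m = (1 - p m) / p m) (hv : ∀ m, v m = δ m * f m)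
    (hvu : Tendsto (fun m => v m * u m ^ (-(γ / 2))) atTop
      (nhds (C ^ ((γ + 1) / 2) * d (Real.sqrt C) / Cd)))
    (α : ℕ → ℝ) (hα : ∀ m, α m ∈ Set.Ioo (0 : ℝ) 1)
    (ωB : ℕ → ℝ) (hωB : ∀ m, 0 < ωB m)
    (hωBeq : ∀ m, (1 - cdf d (ωB m)) / (1 - cdf d (ωB m * (1 + u m) ^ (-(1 : ℝ) / 2)))
      = (α m / (1 - α m)) / f m)
    (hconv : Tendsto (fun m => δ m * (α m / (1 - α m))) atTop
      (nhds ((2 * Real.sqrt C * d (Real.sqrt C) / γ)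
        / (1 - (2 * cdf d (Real.sqrt C) - 1))))) :
    Tendsto
      (fun m => ωB m ^ 2 /
        (((Cd / γ) / (1 - cdf d (Real.sqrt C))) ^ (2 / γ)
          * (f m / (α m / (1 - α m))) ^ (2 / γ)))
      atTop (nhds 1) := by
  have hγ := h.gamma_pos
  set sC := Real.sqrt C with hsCdef
  have hsC0 : 0 < sC := Real.sqrt_pos.2 hC
  set TC := BFDRaux.T d sC with hTCdef
  have hTC : 0 < TC := T_pos h sC
  have hcdfC : 1 - cdf d sC = TC := one_sub_cdf h sC
  set r : ℕ → ℝ := fun m => α m / (1 - α m) with hrdef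
  have hrpos : ∀ m, 0 < r m := fun m => div_pos (hα m).1 (by linarith [(hα m).2])
  have hfpos : ∀ m, 0 < f m := fun m => by
    rw [hf m]; exact div_pos (by linarith [(hp m).2]) (hp m).1
  set t : ℕ → ℝ := fun m => ωB m * (1 + u m) ^ (-(1 : ℝ) / 2) with htdef
  have h1u : ∀ m, (0:ℝ) < 1 + u m := fun m => by linarith [hu m]
  have hspos : ∀ m, (0:ℝ) < (1 + u m) ^ (-(1 : ℝ) / 2) := fun m =>
    rpow_pos_of_pos (h1u m) _
  have htpos : ∀ m, 0 < t m := fun m => mul_pos (hωB m) (hspos m)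
  -- the BFDR equation in tail form
  have E1 : ∀ m, BFDRaux.T d (ωB m) = BFDRaux.T d (t m) * (r m / f m) := by
    intro m
    have h2 := hωBeq m
    rw [one_sub_cdf h (ωB m), one_sub_cdf h (ωB m * (1 + u m) ^ (-(1 : ℝ) / 2))] at h2
    rw [div_eq_div_iff (T_pos h _).ne' (hfpos m).ne'] at h2
    have h3 : BFDRaux.T d (ωB m) = α m / (1 - α m) * BFDRaux.T d (t m) / f m := by
      rw [eq_div_iff (hfpos m).ne']
      exact h2
    rw [h3]
    simp only [hrdef]
    ring
  -- v grows to infinity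
  have hC0pos : 0 < C ^ ((γ + 1) / 2) * d sC / Cd :=
    div_pos (mul_pos (rpow_pos_of_pos hC _) (h.pos _ hsC0)) h.Cd_pos
  have hvtop : Tendsto v atTop atTop := by
    have hcomp : Tendsto (fun m => u m ^ (γ / 2)) atTop atTop :=
      (tendsto_rpow_atTop (by linarith : (0:ℝ) < γ / 2)).comp hu'
    have h2 := hvu.pos_mul_atTop hC0pos hcomp
    refine h2.congr fun m => ?_
    rw [mul_assoc, ← Real.rpow_add (hu m)]
    norm_num
  -- the limit Q of δ * r is positive
  set Q : ℝ := (2 * sC * d sC / γ) / (1 - (2 * cdf d sC - 1)) with hQdef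
  have hQalt : Q = sC * d sC / (γ * TC) := by
    rw [hQdef, show (1 : ℝ) - (2 * cdf d sC - 1) = 2 * TC by rw [← hcdfC]; ring]
    field_simp
  have hQpos : 0 < Q := by
    rw [hQalt]
    exact div_pos (mul_pos hsC0 (h.pos _ hsC0)) (mul_pos hγ hTC)
  -- r / f tends to 0
  have hrf_id : ∀ m, r m / f m = (δ m * r m) * (v m)⁻¹ := by
    intro m
    rw [hv m]
    field_simp [(hδ m).ne', (hfpos m).ne']
  have rf0 : Tendsto (fun m => r m / f m) atTop (nhds 0) := by
    have h2 := hconv.mul hvtop.inv_tendsto_atTop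
    rw [mul_zero] at h2
    exact h2.congr fun m => (hrf_id m).symm
  -- T (ωB m) tends to 0, hence ωB tends to infinity
  have Tω0 : Tendsto (fun m => BFDRaux.T d (ωB m)) atTop (nhds 0) := by
    refine squeeze_zero (fun m => (T_nonneg h _)) (fun m => ?_) rf0
    rw [E1 m]
    have := mul_le_mul_of_nonneg_right (T_le_one h (t m))
      (div_nonneg (hrpos m).le (hfpos m).le)
    linarith
  have ωtop : Tendsto ωB atTop atTop := by
    rw [tendsto_atTop]
    intro b
    filter_upwards [Tω0.eventually (eventually_lt_nhds (T_pos h b))] with m hm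
    by_contra hc
    push_neg at hc
    have := T_antitone h hc.le
    linarith
  have gω : Tendsto (fun m => BFDRaux.T d (ωB m) * ωB m ^ γ) atTop (nhds (Cd / γ)) :=
    (T_tail h).comp ωtop
  -- the correction factor limit
  have huratio : Tendsto (fun m => u m / (1 + u m)) atTop (nhds 1) := by
    have h1 : Tendsto (fun m => 1 + u m) atTop atTop :=
      tendsto_atTop_add_const_left _ 1 hu'
    have h2 : Tendsto (fun m => (1 + u m)⁻¹) atTop (nhds 0) := h1.inv_tendsto_atTop
    have h3 : Tendsto (fun m => 1 - (1 + u m)⁻¹) atTop (nhds (1 - 0)) :=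
      tendsto_const_nhds.sub h2
    rw [sub_zero] at h3
    refine h3.congr fun m => ?_
    field_simp [(h1u m).ne']
    ring
  have hpow1 : Tendsto (fun m => (u m / (1 + u m)) ^ (γ / 2)) atTop (nhds 1) := by
    have hc : ContinuousAt (fun x : ℝ => x ^ (γ / 2)) 1 :=
      Real.continuousAt_rpow_const 1 _ (Or.inl one_ne_zero)
    have h2 := hc.tendsto.comp huratio
    rwa [Real.one_rpow] at h2
  have Blim : Tendsto (fun m => (f m / r m) * (1 + u m) ^ (-(γ / 2))) atTop
      (nhds ((C ^ ((γ + 1) / 2) * d sC / Cd) * Q⁻¹ * 1)) := by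
    have h2 := (hvu.mul (hconv.inv₀ hQpos.ne')).mul hpow1
    refine h2.congr fun m => ?_
    rw [hv m, Real.div_rpow (hu m).le (h1u m).le, Real.rpow_neg (hu m).le,
      Real.rpow_neg (h1u m).le]
    have hα1 : α m ≠ 0 := (hα m).1.ne'
    have hα2 : (1:ℝ) - α m ≠ 0 := by have := (hα m).2; intro hh; simp only [sub_eq_zero] at hh; linarith
    field_simp [(hδ m).ne', hα1, hα2, (rpow_pos_of_pos (hu m) (γ/2)).ne',
      (rpow_pos_of_pos (h1u m) (γ/2)).ne']
    simp only [hrdef]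
    field_simp
  -- identity for g(t m)
  have Et : ∀ m, t m ^ γ * BFDRaux.T d (t m)
      = (BFDRaux.T d (ωB m) * ωB m ^ γ) * ((f m / r m) * (1 + u m) ^ (-(γ / 2))) := by
    intro m
    have htγ : t m ^ γ = ωB m ^ γ * (1 + u m) ^ (-(γ / 2)) := by
      rw [htdef]
      simp only
      rw [Real.mul_rpow (hωB m).le (hspos m).le, ← Real.rpow_mul (h1u m).le]
      congr 2
      ring
    have hTt : BFDRaux.T d (t m) = BFDRaux.T d (ωB m) * (f m / r m) := by
      rw [E1 m, mul_assoc, div_mul_div_comm, mul_comm (r m) (f m),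
        div_self (mul_pos (hfpos m) (hrpos m)).ne', mul_one]
    rw [htγ, hTt]
    ring
  -- limit of g(t m)
  have glim0 : Tendsto (fun m => t m ^ γ * BFDRaux.T d (t m)) atTop
      (nhds (Cd / γ * ((C ^ ((γ + 1) / 2) * d sC / Cd) * Q⁻¹ * 1))) :=
    (gω.mul Blim).congr fun m => (Et m).symm
  have hCexp : C ^ ((γ + 1) / 2) = sC ^ γ * sC := by
    rw [hsCdef, Real.sqrt_eq_rpow, ← Real.rpow_mul hC.le, ← Real.rpow_add hC]
    congr 1
    ring
  have hconstval : Cd / γ * ((C ^ ((γ + 1) / 2) * d sC / Cd) * Q⁻¹ * 1) = sC ^ γ * TC := by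
    rw [hCexp, hQalt, mul_one]
    field_simp [(h.pos _ hsC0).ne', h.Cd_pos.ne']
  rw [hconstval] at glim0
  -- t m → sqrt C
  have tlim : Tendsto t atTop (nhds sC) := tendsto_of_g h hsC0 htpos glim0
  have Ttlim : Tendsto (fun m => BFDRaux.T d (t m)) atTop (nhds TC) :=
    ((T_continuous h).tendsto sC).comp tlim
  -- main limit
  have Xlim : Tendsto (fun m => BFDRaux.T d (ωB m) * ωB m ^ γ / BFDRaux.T d (t m)) atTop
      (nhds ((Cd / γ) / TC)) := gω.div Ttlim hTC.ne'
  have hK' : (0:ℝ) < Cd / γ / TC := div_pos (div_pos h.Cd_pos hγ) hTC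
  have X1 : Tendsto (fun m => (BFDRaux.T d (ωB m) * ωB m ^ γ / BFDRaux.T d (t m))
      / (Cd / γ / TC)) atTop (nhds 1) := by
    have h2 := Xlim.div_const (Cd / γ / TC)
    rwa [div_self hK'.ne'] at h2
  have hfinal := (Real.continuousAt_rpow_const 1 (2 / γ) (Or.inl one_ne_zero)).tendsto.comp X1
  rw [Real.one_rpow] at hfinal
  refine hfinal.congr fun m => ?_
  -- per-m algebraic identity
  have hω := hωB m
  have hrm := hrpos m
  have hfm := hfpos m
  have hTt := T_pos h (t m)
  have hfr : 0 < f m / r m := div_pos hfm hrm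
  have hωγ : 0 < ωB m ^ γ := rpow_pos_of_pos hω γ
  show (BFDRaux.T d (ωB m) * ωB m ^ γ / BFDRaux.T d (t m) / (Cd / γ / TC)) ^ (2 / γ)
      = ωB m ^ 2 / ((Cd / γ / (1 - cdf d sC)) ^ (2 / γ) * (f m / r m) ^ (2 / γ))
  rw [hcdfC]
  have s1 : BFDRaux.T d (ωB m) * ωB m ^ γ / BFDRaux.T d (t m) = ωB m ^ γ * (r m / f m) := by
    rw [E1 m]
    field_simp
  rw [s1]
  have h1 : ωB m ^ γ * (r m / f m) / (Cd / γ / TC) = ωB m ^ γ / ((f m / r m) * (Cd / γ / TC)) := by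
    field_simp
  have h2 : (ωB m ^ γ / ((f m / r m) * (Cd / γ / TC))) ^ (2 / γ)
      = (ωB m ^ γ) ^ (2 / γ) / ((f m / r m) * (Cd / γ / TC)) ^ (2 / γ) :=
    Real.div_rpow hωγ.le (mul_pos hfr hK').le _
  have h3 : (ωB m ^ γ) ^ (2 / γ) = ωB m ^ 2 := by
    rw [← Real.rpow_mul hω.le, show γ * (2 / γ) = ((2:ℕ):ℝ) by push_cast; field_simp,
      Real.rpow_natCast]
  have h4 : ((f m / r m) * (Cd / γ / TC)) ^ (2 / γ)
      = (f m / r m) ^ (2 / γ) * (Cd / γ / TC) ^ (2 / γ) := Real.mul_rpow hfr.le hK'.le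
  rw [h1, h2, h3, h4]
  ring
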